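/- arXiv:1304.5466 — 3 statements merged into one kernel-verified Lean document; each statement's English description precedes it below -/
import Mathlib

section
/- For i = 0,…,⌊n/2⌋, ℓ = i,…,n−i, k = 0,…,n and r = 1,…,d_i, one has J_{k,ℓ} u_{i,r}^ℓ = δ_{i,0} [n choose k]_q^{1/2} [n choose ℓ]_q^{1/2} u_{0,1}^k, where δ_{i,0} is the Kronecker delta. -/
open Matrix

/-- The Gaussian binomial coefficient `[a choose b]_q`, as a real number:
`∏_{i=0}^{b-1} (q^(a-i)-1)/(q^(b-i)-1)` for `a, b ≥ 0`, and `0` if `a < 0` or `b < 0`. -/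
noncomputable def gbinom (q : ℝ) (a b : ℤ) : ℝ :=
  if 0 ≤ a ∧ 0 ≤ b then
    ∏ i ∈ Finset.range b.toNat, (q ^ (a - i) - 1) / (q ^ (b - i) - 1)
  else 0

/-- The matrix `W_{k,ℓ}` on `L(V) × L(V)`: `(W_{k,ℓ})_{x,y} = 1` if `dim x = k`, `dim y = ℓ`
and `dim (x ⊓ y) = min k ℓ`, and `0` otherwise.  (Indices in `ℤ`, so that `W_{-1,0} = 0`.) -/
noncomputable def Wmat (K V : Type*) [Field K] [AddCommGroup V] [Module K V] (k l : ℤ) :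
    Matrix (Submodule K V) (Submodule K V) ℝ :=
  Matrix.of fun x y =>
    if (Module.finrank K x : ℤ) = k ∧ (Module.finrank K y : ℤ) = l ∧
        (Module.finrank K ↥(x ⊓ y) : ℤ) = min k l then 1 else 0

/-- The all-ones matrix `J` on `L(V) × L(V)`. -/
noncomputable def Jmat (K V : Type*) [Field K] [AddCommGroup V] [Module K V] :
    Matrix (Submodule K V) (Submodule K V) ℝ :=
  Matrix.of fun _ _ => 1

/-- `J_{k,ℓ} := I_k J I_ℓ`, where `I_k := W_{k,k}`. -/
noncomputable def JJmat (K V : Type*) [Field K] [AddCommGroup V] [Module K V]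
    [Fintype (Submodule K V)] (k l : ℤ) : Matrix (Submodule K V) (Submodule K V) ℝ :=
  Wmat K V k k * Jmat K V * Wmat K V l l

/-- The subspace `U_i ⊆ ℝ^{L(V)}` of vectors supported on `L_i(V)` and killed by
`W_{i-1,i}`. -/
noncomputable def Usub (K V : Type*) [Field K] [AddCommGroup V] [Module K V]
    [Fintype (Submodule K V)] (i : ℕ) : Submodule ℝ (Submodule K V → ℝ) :=
  LinearMap.ker (Matrix.mulVecLin (Wmat K V ((i : ℤ) - 1) (i : ℤ))) ⊓
    ⨅ x ∈ {x : Submodule K V | Module.finrank K x ≠ i},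
      LinearMap.ker (LinearMap.proj (R := ℝ) (φ := fun _ : Submodule K V => ℝ) x)

/-- The vector `u^k := q^{-i(k-i)/2} [n-2i choose k-i]_q^{-1/2} W_{k,i} u` built from a
vector `u ∈ U_i`, with the convention that it is `0` if `k < i` or `k > n - i`. -/
noncomputable def ulift' (K V : Type*) [Field K] [AddCommGroup V] [Module K V]
    [Fintype (Submodule K V)] (q : ℝ) (n i k : ℕ) (v : Submodule K V → ℝ) :
    Submodule K V → ℝ :=
  if i ≤ k ∧ k ≤ n - i then
    ((Real.sqrt q) ^ (-(i * ((k : ℤ) - i))) *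
      (Real.sqrt (gbinom q ((n : ℤ) - 2 * i) ((k : ℤ) - i)))⁻¹) •
      (Wmat K V k i).mulVec v
  else 0


open Module Finset

lemma gbinom_nat (q : ℝ) (a b : ℕ) :
    gbinom q a b = ∏ i ∈ range b, (q ^ ((a:ℤ) - i) - 1) / (q ^ ((b:ℤ) - i) - 1) := by
  simp [gbinom]

lemma gbinom_pos {q : ℝ} (hq : 1 < q) {a b : ℕ} (h : b ≤ a) : 0 < gbinom q (a:ℤ) (b:ℤ) := by
  rw [gbinom_nat]
  refine Finset.prod_pos fun i hi => ?_
  rw [Finset.mem_range] at hi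
  rw [show (a:ℤ) - i = ((a - i : ℕ):ℤ) by omega, zpow_natCast,
    show (b:ℤ) - i = ((b - i : ℕ):ℤ) by omega, zpow_natCast]
  have h1 : (1:ℝ) < q ^ (a - i) := one_lt_pow₀ hq (by omega)
  have h2 : (1:ℝ) < q ^ (b - i) := one_lt_pow₀ hq (by omega)
  exact div_pos (by linarith) (by linarith)

lemma gbinom_eq {q : ℝ} (hq : 1 < q) {a b : ℕ} (h : b ≤ a) :
    gbinom q (a:ℤ) (b:ℤ) = ∏ i ∈ range b, ((q^a - q^i)/(q^b - q^i)) := by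
  have hq0 : q ≠ 0 := by positivity
  rw [gbinom_nat]
  refine Finset.prod_congr rfl fun i hi => ?_
  rw [Finset.mem_range] at hi
  rw [show (a:ℤ) - i = ((a - i : ℕ):ℤ) by omega, zpow_natCast,
    show (b:ℤ) - i = ((b - i : ℕ):ℤ) by omega, zpow_natCast,
    ]
  have h1 : (1:ℝ) < q ^ (b - i) := one_lt_pow₀ hq (by omega)
  have h2 : (0:ℝ) < q ^ b - q ^ i := by
    have := pow_lt_pow_right₀ hq hi
    linarith
  rw [div_eq_div_iff (by linarith) (ne_of_gt h2)]
  have e1 : q ^ (a - i) * q ^ i = q ^ a := by rw [← pow_add]; congr 1; omega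
  have e2 : q ^ (b - i) * q ^ i = q ^ b := by rw [← pow_add]; congr 1; omega
  rw [← e1, ← e2]; ring

section Count

variable {K W : Type*} [Field K] [Fintype K] [AddCommGroup W] [Module K W] [FiniteDimensional K W]

lemma finite_submodule' : Finite (Submodule K W) := by
  have : Finite W := Module.finite_iff_finite.mp ‹_›
  exact Finite.of_injective (fun x => (x : Set W)) SetLike.coe_injective

lemma card_subspaces_nat {m : ℕ} :
    Nat.card {x : Submodule K W // finrank K ↥x = m} *
      ∏ i ∈ range m, (Fintype.card K ^ m - Fintype.card K ^ i) =
    Nat.card { s : Fin m → W // LinearIndependent K s } := by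
  classical
  have hW : Finite W := Module.finite_iff_finite.mp ‹_›
  have hS : Finite (Submodule K W) := finite_submodule'
  set q := Fintype.card K with hqdef
  let f : { s : Fin m → W // LinearIndependent K s } → {x : Submodule K W // finrank K ↥x = m} :=
    fun s => ⟨Submodule.span K (Set.range s.1), by
      rw [finrank_span_eq_card s.2, Fintype.card_fin]⟩
  have fiber_card : ∀ x : {x : Submodule K W // finrank K ↥x = m},
      Nat.card {s // f s = x} = ∏ i ∈ range m, (q ^ m - q ^ i) := by
    intro x
    have e : {s // f s = x} ≃ { t : Fin m → ↥x.1 // LinearIndependent K t } :=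
      { toFun := fun p => ⟨fun j => ⟨p.1.1 j, by
          have hx : Submodule.span K (Set.range p.1.1) = x.1 := congrArg Subtype.val p.2
          exact hx ▸ Submodule.subset_span (Set.mem_range_self j)⟩,
          LinearIndependent.of_comp x.1.subtype p.1.2⟩
        invFun := fun t => ⟨⟨fun j => (t.1 j : W),
            t.2.map' x.1.subtype (Submodule.ker_subtype _)⟩, by
          apply Subtype.ext
          show Submodule.span K (Set.range fun j => ((t.1 j : W))) = x.1
          have hc : (fun j => ((t.1 j : W))) = x.1.subtype ∘ t.1 := rfl
          rw [hc, Set.range_comp, Submodule.span_image,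
            t.2.span_eq_top_of_card_eq_finrank' (by rw [Fintype.card_fin, x.2]),
            Submodule.map_top, Submodule.range_subtype]⟩
        left_inv := fun p => Subtype.ext (Subtype.ext rfl)
        right_inv := fun t => Subtype.ext (funext fun j => Subtype.ext rfl) }
    rw [Nat.card_congr e]
    have hx2 : finrank K ↥x.1 = m := x.2
    have hcl := card_linearIndependent (K := K) (V := ↥x.1) (k := m) (le_of_eq hx2.symm)
    rw [hx2] at hcl
    rw [hcl]
    exact Fin.prod_univ_eq_prod_range (fun i => q ^ m - q ^ i) m
  have total := Nat.card_congr (Equiv.sigmaFiberEquiv f).symm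
  letI : Fintype { s : Fin m → W // LinearIndependent K s } := Fintype.ofFinite _
  letI : Fintype {x : Submodule K W // finrank K ↥x = m} := Fintype.ofFinite _
  letI : ∀ x, Fintype {s // f s = x} := fun x => Fintype.ofFinite _
  rw [Nat.card_eq_fintype_card, Nat.card_eq_fintype_card, Fintype.card_sigma] at total
  rw [Nat.card_eq_fintype_card, Nat.card_eq_fintype_card, total]
  have : ∀ x ∈ (univ : Finset {x : Submodule K W // finrank K ↥x = m}),
      Fintype.card {s // f s = x} = ∏ i ∈ range m, (q ^ m - q ^ i) := by
    intro x _
    rw [← Nat.card_eq_fintype_card, fiber_card x]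
  rw [Finset.sum_congr rfl this, Finset.sum_const, smul_eq_mul, Finset.card_univ]

lemma card_subspaces {m : ℕ} (hm : m ≤ finrank K W) :
    (Nat.card {x : Submodule K W // finrank K ↥x = m} : ℝ) =
      gbinom (Fintype.card K) (finrank K W : ℤ) (m : ℤ) := by
  classical
  set q := Fintype.card K with hqdef
  set n := finrank K W with hndef
  have hq : 1 < q := Fintype.one_lt_card
  have hq1 : (1:ℝ) < (q:ℝ) := by exact_mod_cast hq
  have hW : Finite W := Module.finite_iff_finite.mp ‹_›
  have key := card_subspaces_nat (K := K) (W := W) (m := m)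
  rw [card_linearIndependent (K := K) (V := W) hm,
    Fin.prod_univ_eq_prod_range (fun i => q ^ n - q ^ i) m] at key
  have hcast : ∀ a : ℕ, m ≤ a → ((∏ i ∈ range m, (q ^ a - q ^ i) : ℕ) : ℝ)
      = ∏ i ∈ range m, ((q:ℝ) ^ a - (q:ℝ) ^ i) := by
    intro a ha
    rw [Nat.cast_prod]
    refine Finset.prod_congr rfl fun i hi => ?_
    rw [Finset.mem_range] at hi
    rw [Nat.cast_sub (Nat.pow_le_pow_right (le_of_lt hq) (by omega)), Nat.cast_pow, Nat.cast_pow]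
  have keyR : (Nat.card {x : Submodule K W // finrank K ↥x = m} : ℝ) *
      ∏ i ∈ range m, ((q:ℝ) ^ m - (q:ℝ) ^ i) = ∏ i ∈ range m, ((q:ℝ) ^ n - (q:ℝ) ^ i) := by
    rw [← hcast m le_rfl, ← hcast n hm, ← Nat.cast_mul, key]
  have hden : ∀ i ∈ range m, (0:ℝ) < (q:ℝ) ^ m - (q:ℝ) ^ i := by
    intro i hi
    rw [Finset.mem_range] at hi
    have := pow_lt_pow_right₀ hq1 hi
    linarith
  have hdenprod : (0:ℝ) < ∏ i ∈ range m, ((q:ℝ) ^ m - (q:ℝ) ^ i) := Finset.prod_pos hden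
  rw [gbinom_eq hq1 hm, Finset.prod_div_distrib, eq_div_iff (ne_of_gt hdenprod)]
  exact keyR

end Count

section Count2
variable {K W : Type*} [Field K] [AddCommGroup W] [Module K W] [FiniteDimensional K W]

omit [FiniteDimensional K W] in
lemma le_comap_mkQ (x' : Submodule K W) (w : Submodule K (W ⧸ x')) :
    x' ≤ Submodule.comap x'.mkQ w := by
  intro v hv
  have h0 : x'.mkQ v = 0 := (Submodule.Quotient.mk_eq_zero x').mpr hv
  simp [Submodule.mem_comap, h0]

lemma finrank_comap_mkQ (x' : Submodule K W) (w : Submodule K (W ⧸ x')) :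
    finrank K ↥(Submodule.comap x'.mkQ w) = finrank K ↥w + finrank K ↥x' := by
  set y := Submodule.comap x'.mkQ w with hy
  have hx'y : x' ≤ y := le_comap_mkQ x' w
  let f : ↥y →ₗ[K] W ⧸ x' := x'.mkQ.comp y.subtype
  have hrange : LinearMap.range f = w := by
    show LinearMap.range (x'.mkQ.comp y.subtype) = w
    rw [LinearMap.range_comp, Submodule.range_subtype]
    exact Submodule.map_comap_eq_of_surjective (Submodule.mkQ_surjective x') w
  have hker : finrank K ↥(LinearMap.ker f) = finrank K ↥x' := by
    have hk : LinearMap.ker f = Submodule.comap y.subtype x' := by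
      show LinearMap.ker (x'.mkQ.comp y.subtype) = _
      rw [LinearMap.ker_comp, Submodule.ker_mkQ]
    rw [hk]
    have h2 := Submodule.finrank_map_subtype_eq y (Submodule.comap y.subtype x')
    rw [Submodule.map_comap_subtype, inf_eq_right.mpr hx'y] at h2
    exact h2.symm
  have h3 := LinearMap.finrank_range_add_finrank_ker f
  rw [hrange, hker] at h3
  omega

noncomputable def superspacesEquiv (x' : Submodule K W) (m : ℕ) :
    {z : Submodule K W // x' ≤ z ∧ finrank K ↥z = m + finrank K ↥x'} ≃
      {w : Submodule K (W ⧸ x') // finrank K ↥w = m} where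
  toFun z := ⟨Submodule.map x'.mkQ z.1, by
    have hc : Submodule.comap x'.mkQ (Submodule.map x'.mkQ z.1) = z.1 := by
      rw [Submodule.comap_map_eq, Submodule.ker_mkQ, sup_eq_left.mpr z.2.1]
    have h := finrank_comap_mkQ x' (Submodule.map x'.mkQ z.1)
    rw [hc, z.2.2] at h
    omega⟩
  invFun w := ⟨Submodule.comap x'.mkQ w.1, le_comap_mkQ x' w.1,
    by rw [finrank_comap_mkQ, w.2]⟩
  left_inv z := Subtype.ext (by
    dsimp only
    rw [Submodule.comap_map_eq, Submodule.ker_mkQ, sup_eq_left.mpr z.2.1])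
  right_inv w := Subtype.ext
    (Submodule.map_comap_eq_of_surjective (Submodule.mkQ_surjective x') w.1)

noncomputable def subspacesLeEquiv (x' : Submodule K W) (m : ℕ) :
    {z : Submodule K W // z ≤ x' ∧ finrank K ↥z = m} ≃
      {w : Submodule K ↥x' // finrank K ↥w = m} where
  toFun z := ⟨Submodule.comap x'.subtype z.1, by
    have h2 := Submodule.finrank_map_subtype_eq x' (Submodule.comap x'.subtype z.1)
    rw [Submodule.map_comap_subtype, inf_eq_right.mpr z.2.1] at h2
    rw [← h2, z.2.2]⟩
  invFun w := ⟨Submodule.map x'.subtype w.1, Submodule.map_subtype_le _ _,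
    by rw [Submodule.finrank_map_subtype_eq, w.2]⟩
  left_inv z := Subtype.ext (by
    dsimp only
    rw [Submodule.map_comap_subtype, inf_eq_right.mpr z.2.1])
  right_inv w := Subtype.ext (by
    dsimp only
    rw [Submodule.comap_map_eq, Submodule.ker_subtype, sup_bot_eq])

end Count2

-- ===== matrix helper lemmas =====
section MatLemmas
open scoped Classical
variable {K V : Type*} [Field K] [AddCommGroup V] [Module K V] [FiniteDimensional K V]
  [Fintype (Submodule K V)]

lemma inf_finrank_iff_le (z x' : Submodule K V) :
    finrank K ↥(z ⊓ x') = finrank K ↥x' ↔ x' ≤ z := by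
  constructor
  · intro h
    have he := Submodule.eq_of_le_of_finrank_eq (inf_le_right : z ⊓ x' ≤ x') h
    rw [← he]
    exact inf_le_left
  · intro h
    rw [inf_eq_right.mpr h]

lemma Wmat_same_apply (k : ℤ) (x y : Submodule K V) :
    Wmat K V k k x y = if (x = y ∧ (finrank K ↥x : ℤ) = k) then 1 else 0 := by
  unfold Wmat
  rw [Matrix.of_apply]
  refine if_congr ?_ rfl rfl
  rw [min_self]
  constructor
  · rintro ⟨h1, h2, h3⟩
    have e1 : finrank K ↥(x ⊓ y) = finrank K ↥y := by exact_mod_cast h3.trans h2.symm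
    have hyx : y ≤ x := (inf_finrank_iff_le x y).mp e1
    have e2 : finrank K ↥(y ⊓ x) = finrank K ↥x := by
      rw [inf_comm]; exact_mod_cast h3.trans h1.symm
    have hxy : x ≤ y := (inf_finrank_iff_le y x).mp e2
    exact ⟨le_antisymm hxy hyx, h1⟩
  · rintro ⟨rfl, h⟩
    exact ⟨h, h, by rw [inf_idem]; exact h⟩

lemma Wdiag_mulVec (k : ℤ) (v : Submodule K V → ℝ) :
    (Wmat K V k k).mulVec v = fun x : Submodule K V => if (finrank K ↥x : ℤ) = k then v x else 0 := by
  classical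
  funext x
  simp only [Matrix.mulVec, dotProduct, Wmat_same_apply]
  rw [Finset.sum_eq_single x]
  · by_cases h : (finrank K ↥x : ℤ) = k <;> simp [h]
  · intro y _ hyx
    rw [if_neg (fun hc => hyx hc.1.symm), zero_mul]
  · intro h
    exact absurd (Finset.mem_univ x) h

lemma JJmat_mulVec (k l : ℤ) (v : Submodule K V → ℝ) :
    (JJmat K V k l).mulVec v = fun x : Submodule K V => if (finrank K ↥x : ℤ) = k then
      ∑ z : Submodule K V, (if (finrank K ↥z : ℤ) = l then v z else 0) else 0 := by
  classical
  unfold JJmat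
  rw [← Matrix.mulVec_mulVec, ← Matrix.mulVec_mulVec, Wdiag_mulVec l v]
  have h2 : (Jmat K V).mulVec (fun z : Submodule K V => if (finrank K ↥z : ℤ) = l then v z else 0) =
      fun _ => ∑ z : Submodule K V, (if (finrank K ↥z : ℤ) = l then v z else 0) := by
    funext x'
    simp [Jmat, Matrix.mulVec, dotProduct]
  rw [h2, Wdiag_mulVec]

lemma sum_mulVec (A : Matrix (Submodule K V) (Submodule K V) ℝ) (u : Submodule K V → ℝ) :
    ∑ z, (A.mulVec u) z = ∑ x', (∑ z, A z x') * u x' := by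
  simp only [Matrix.mulVec, dotProduct]
  rw [Finset.sum_comm]
  simp [Finset.sum_mul]

lemma sum_boole_card (P : Submodule K V → Prop) [DecidablePred P] :
    ∑ z : Submodule K V, (if P z then (1:ℝ) else 0) = (Nat.card {z // P z} : ℝ) := by
  rw [Finset.sum_boole, Nat.card_eq_fintype_card, Fintype.card_subtype]

lemma col_sum_W_ge (m i' : ℕ) (him : i' ≤ m) (x' : Submodule K V) (hx' : finrank K ↥x' = i') :
    ∑ z, Wmat K V (m:ℤ) (i':ℤ) z x' =
      (Nat.card {z : Submodule K V // x' ≤ z ∧ finrank K ↥z = m} : ℝ) := by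
  classical
  unfold Wmat
  simp only [Matrix.of_apply]
  have hmin : min (m:ℤ) (i':ℤ) = (i':ℤ) := min_eq_right (by exact_mod_cast him)
  have hcond : ∀ z : Submodule K V,
      ((finrank K ↥z : ℤ) = m ∧ (finrank K ↥x' : ℤ) = i' ∧
        (finrank K ↥(z ⊓ x') : ℤ) = min (m:ℤ) (i':ℤ))
      ↔ (x' ≤ z ∧ finrank K ↥z = m) := by
    intro z
    rw [hmin]
    constructor
    · rintro ⟨h1, _, h3⟩
      have hz : finrank K ↥(z ⊓ x') = finrank K ↥x' := by
        rw [hx']; exact_mod_cast h3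
      exact ⟨(inf_finrank_iff_le z x').mp hz, by exact_mod_cast h1⟩
    · rintro ⟨h1, h2⟩
      refine ⟨by exact_mod_cast h2, by exact_mod_cast hx', ?_⟩
      rw [inf_eq_right.mpr h1]
      exact_mod_cast hx'
  calc ∑ z : Submodule K V, (if ((finrank K ↥z : ℤ) = m ∧ (finrank K ↥x' : ℤ) = i' ∧
        (finrank K ↥(z ⊓ x') : ℤ) = min (m:ℤ) (i':ℤ)) then (1:ℝ) else 0)
      = ∑ z : Submodule K V, (if (x' ≤ z ∧ finrank K ↥z = m) then (1:ℝ) else 0) :=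
        Finset.sum_congr rfl (fun z _ => if_congr (hcond z) rfl rfl)
    _ = _ := sum_boole_card _

lemma col_sum_W_le (m i' : ℕ) (hmi : m ≤ i') (x' : Submodule K V) (hx' : finrank K ↥x' = i') :
    ∑ z, Wmat K V (m:ℤ) (i':ℤ) z x' =
      (Nat.card {z : Submodule K V // z ≤ x' ∧ finrank K ↥z = m} : ℝ) := by
  classical
  unfold Wmat
  simp only [Matrix.of_apply]
  have hmin : min (m:ℤ) (i':ℤ) = (m:ℤ) := min_eq_left (by exact_mod_cast hmi)
  have hcond : ∀ z : Submodule K V,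
      ((finrank K ↥z : ℤ) = m ∧ (finrank K ↥x' : ℤ) = i' ∧
        (finrank K ↥(z ⊓ x') : ℤ) = min (m:ℤ) (i':ℤ))
      ↔ (z ≤ x' ∧ finrank K ↥z = m) := by
    intro z
    rw [hmin]
    constructor
    · rintro ⟨h1, _, h3⟩
      have hz : finrank K ↥(x' ⊓ z) = finrank K ↥z := by
        rw [inf_comm]
        exact_mod_cast h3.trans h1.symm
      exact ⟨(inf_finrank_iff_le x' z).mp hz, by exact_mod_cast h1⟩
    · rintro ⟨h1, h2⟩
      refine ⟨by exact_mod_cast h2, by exact_mod_cast hx', ?_⟩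
      rw [inf_eq_left.mpr h1]
      exact_mod_cast h2
  calc ∑ z : Submodule K V, (if ((finrank K ↥z : ℤ) = m ∧ (finrank K ↥x' : ℤ) = i' ∧
        (finrank K ↥(z ⊓ x') : ℤ) = min (m:ℤ) (i':ℤ)) then (1:ℝ) else 0)
      = ∑ z : Submodule K V, (if (z ≤ x' ∧ finrank K ↥z = m) then (1:ℝ) else 0) :=
        Finset.sum_congr rfl (fun z _ => if_congr (hcond z) rfl rfl)
    _ = _ := sum_boole_card _

lemma Usub_apply_eq_zero {i : ℕ} {u : Submodule K V → ℝ} (h : u ∈ Usub K V i)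
    {x : Submodule K V} (hx : finrank K ↥x ≠ i) : u x = 0 := by
  have h2 := (Submodule.mem_inf.mp h).2
  simp only [Submodule.mem_iInf] at h2
  simpa using h2 x hx

lemma Usub_W {i : ℕ} {u : Submodule K V → ℝ} (h : u ∈ Usub K V i) :
    (Wmat K V ((i:ℤ) - 1) (i:ℤ)).mulVec u = 0 := by
  have h1 := (Submodule.mem_inf.mp h).1
  rwa [LinearMap.mem_ker, Matrix.mulVecLin_apply] at h1

end MatLemmas


/-- For `0 ≤ i ≤ ⌊n/2⌋`, `i ≤ ℓ ≤ n - i`, `0 ≤ k ≤ n` and `r < d i`: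
`J_{k,ℓ} u_{i,r}^ℓ = δ_{i,0} [n choose k]_q^{1/2} [n choose ℓ]_q^{1/2} u_{0,1}^k`,
where `u_{0,1}` is the first basis vector of the (one-dimensional) space `U_0`. -/
theorem JJmat_mulVec_ulift
    {K V : Type*} [Field K] [Fintype K] [AddCommGroup V] [Module K V] [FiniteDimensional K V]
    [Fintype (Submodule K V)]
    (n : ℕ) (hV : Module.finrank K V = n)
    (d : ℕ → ℕ) (hd : ∀ i, d i = Module.finrank ℝ (Usub K V i)) (h0 : 0 < d 0)
    (u : (i : ℕ) → Fin (d i) → (Submodule K V → ℝ))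
    (humem : ∀ i, i ≤ n / 2 → ∀ r, u i r ∈ Usub K V i)
    (huorth : ∀ i, i ≤ n / 2 → ∀ r s : Fin (d i),
      u i r ⬝ᵥ u i s = if r = s then 1 else 0)
    (huspan : ∀ i, i ≤ n / 2 →
      Submodule.span ℝ (Set.range (u i)) = Usub K V i)
    (i l k : ℕ) (hi : i ≤ n / 2) (hil : i ≤ l) (hln : l ≤ n - i) (hk : k ≤ n)
    (r : Fin (d i)) :
    (JJmat K V k l).mulVec (ulift' K V (Fintype.card K) n i l (u i r)) =
      ((if i = 0 then (1 : ℝ) else 0) *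
          Real.sqrt (gbinom (Fintype.card K) (n : ℤ) (k : ℤ)) *
          Real.sqrt (gbinom (Fintype.card K) (n : ℤ) (l : ℤ))) •
        ulift' K V (Fintype.card K) n 0 k (u 0 ⟨0, h0⟩) := by
  classical
  have hq1 : 1 < Fintype.card K := Fintype.one_lt_card
  have hqR : (1:ℝ) < (Fintype.card K : ℝ) := by exact_mod_cast hq1
  by_cases hi0 : i = 0
  · -- ===================== case i = 0 =====================
    subst hi0
    have hln' : l ≤ n := by omega
    have hsupp : ∀ (s : Fin (d 0)) (x : Submodule K V), x ≠ ⊥ → u 0 s x = 0 := by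
      intro s x hx
      refine Usub_apply_eq_zero (humem 0 (Nat.zero_le _) s) (fun hc => hx ?_)
      exact Submodule.finrank_eq_zero.mp hc
    have hdotbot : ∀ s t : Fin (d 0), u 0 s ⬝ᵥ u 0 t = u 0 s ⊥ * u 0 t ⊥ := by
      intro s t
      have hdef : u 0 s ⬝ᵥ u 0 t = ∑ x : Submodule K V, u 0 s x * u 0 t x := rfl
      rw [hdef]
      exact Finset.sum_eq_single ⊥ (fun b _ hb => by rw [hsupp s b hb, zero_mul])
        (fun h => absurd (Finset.mem_univ _) h)
    have hrr := huorth 0 (Nat.zero_le _) r r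
    rw [if_pos rfl, hdotbot] at hrr
    have hr : r = ⟨0, h0⟩ := by
      by_contra hne
      have h2 := huorth 0 (Nat.zero_le _) r ⟨0, h0⟩
      rw [if_neg hne, hdotbot] at h2
      have h3 := huorth 0 (Nat.zero_le _) ⟨0, h0⟩ ⟨0, h0⟩
      rw [if_pos rfl, hdotbot] at h3
      nlinarith [hrr, h2, h3]
    subst hr
    have hcard : ∀ m : ℕ, m ≤ n → (Nat.card {z : Submodule K V // Module.finrank K ↥z = m} : ℝ)
        = gbinom (Fintype.card K) (n:ℤ) (m:ℤ) := by
      intro m hm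
      have hc := card_subspaces (K := K) (W := V) (m := m) (by rw [hV]; exact hm)
      rwa [hV] at hc
    have hW0 : ∀ m : ℕ, (Wmat K V (m:ℤ) ((0:ℕ):ℤ)).mulVec (u 0 ⟨0, h0⟩) =
        fun y : Submodule K V =>
          if (Module.finrank K ↥y : ℤ) = (m:ℤ) then u 0 ⟨0, h0⟩ ⊥ else 0 := by
      intro m
      funext y
      simp only [Matrix.mulVec, dotProduct]
      rw [Finset.sum_eq_single ⊥]
      · have hcond : ((Module.finrank K ↥y : ℤ) = (m:ℤ) ∧
            (Module.finrank K ↥(⊥ : Submodule K V) : ℤ) = ((0:ℕ):ℤ) ∧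
            (Module.finrank K ↥(y ⊓ ⊥) : ℤ) = min (m:ℤ) ((0:ℕ):ℤ))
            ↔ (Module.finrank K ↥y : ℤ) = (m:ℤ) := by
          constructor
          · exact fun h => h.1
          · intro h
            refine ⟨h, by simp, ?_⟩
            rw [inf_bot_eq]
            simp
        rw [show Wmat K V (m:ℤ) ((0:ℕ):ℤ) y ⊥ =
            (if (Module.finrank K ↥y : ℤ) = (m:ℤ) then (1:ℝ) else 0) from by
          unfold Wmat
          rw [Matrix.of_apply]
          exact if_congr hcond rfl rfl]
        rw [ite_mul, one_mul, zero_mul]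
      · intro b _ hb
        rw [hsupp _ b hb, mul_zero]
      · intro h
        exact absurd (Finset.mem_univ _) h
    have hul : ∀ m : ℕ, m ≤ n → ulift' K V (Fintype.card K) n 0 m (u 0 ⟨0, h0⟩) =
        fun y : Submodule K V => if (Module.finrank K ↥y : ℤ) = (m:ℤ) then
          (Real.sqrt (gbinom (Fintype.card K) (n:ℤ) (m:ℤ)))⁻¹ * u 0 ⟨0, h0⟩ ⊥ else 0 := by
      intro m hm
      unfold ulift'
      rw [if_pos ⟨Nat.zero_le _, by omega⟩]
      rw [hW0 m]
      funext y
      simp only [Pi.smul_apply, smul_eq_mul, Nat.cast_zero, zero_mul, neg_zero, zpow_zero,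
        one_mul, mul_zero, sub_zero, mul_ite]
    have hCl : (0:ℝ) < gbinom (Fintype.card K) (n:ℤ) (l:ℤ) := gbinom_pos hqR hln'
    have hCk : (0:ℝ) < gbinom (Fintype.card K) (n:ℤ) (k:ℤ) := gbinom_pos hqR hk
    have hsl : Real.sqrt (gbinom (Fintype.card K) (n:ℤ) (l:ℤ)) ≠ 0 :=
      (Real.sqrt_pos.mpr hCl).ne'
    have hsk : Real.sqrt (gbinom (Fintype.card K) (n:ℤ) (k:ℤ)) ≠ 0 :=
      (Real.sqrt_pos.mpr hCk).ne'
    rw [JJmat_mulVec, hul l hln', hul k hk]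
    have hsum : ∑ z : Submodule K V, (if (Module.finrank K ↥z : ℤ) = (l:ℤ) then
        (if (Module.finrank K ↥z : ℤ) = (l:ℤ) then
          (Real.sqrt (gbinom (Fintype.card K) (n:ℤ) (l:ℤ)))⁻¹ * u 0 ⟨0, h0⟩ ⊥ else 0) else 0)
        = Real.sqrt (gbinom (Fintype.card K) (n:ℤ) (l:ℤ)) * u 0 ⟨0, h0⟩ ⊥ := by
      have e1 : ∀ z : Submodule K V, (if (Module.finrank K ↥z : ℤ) = (l:ℤ) then
          (if (Module.finrank K ↥z : ℤ) = (l:ℤ) then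
            (Real.sqrt (gbinom (Fintype.card K) (n:ℤ) (l:ℤ)))⁻¹ * u 0 ⟨0, h0⟩ ⊥ else 0) else 0)
          = ((Real.sqrt (gbinom (Fintype.card K) (n:ℤ) (l:ℤ)))⁻¹ * u 0 ⟨0, h0⟩ ⊥) *
            (if (Module.finrank K ↥z : ℤ) = (l:ℤ) then (1:ℝ) else 0) := by
        intro z
        by_cases h : (Module.finrank K ↥z : ℤ) = (l:ℤ) <;> simp [h]
      rw [Finset.sum_congr rfl (fun z _ => e1 z), ← Finset.mul_sum, sum_boole_card]
      have e2 : Nat.card {z : Submodule K V // (Module.finrank K ↥z : ℤ) = (l:ℤ)}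
          = Nat.card {z : Submodule K V // Module.finrank K ↥z = l} :=
        Nat.card_congr (Equiv.subtypeEquivRight (fun z => Int.natCast_inj))
      rw [e2, hcard l hln']
      field_simp
      linear_combination (-(u 0 ⟨0, h0⟩ ⊥)) * Real.mul_self_sqrt hCl.le
    funext x
    simp only [Pi.smul_apply, smul_eq_mul]
    rw [hsum]
    simp only [if_true]
    by_cases h : (Module.finrank K ↥x : ℤ) = (k:ℤ)
    · rw [if_pos h, if_pos h, one_mul]
      rw [show Real.sqrt (gbinom (Fintype.card K) (n:ℤ) (k:ℤ)) *
            Real.sqrt (gbinom (Fintype.card K) (n:ℤ) (l:ℤ)) *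
            ((Real.sqrt (gbinom (Fintype.card K) (n:ℤ) (k:ℤ)))⁻¹ * u 0 ⟨0, h0⟩ ⊥)
          = (Real.sqrt (gbinom (Fintype.card K) (n:ℤ) (k:ℤ)) *
              (Real.sqrt (gbinom (Fintype.card K) (n:ℤ) (k:ℤ)))⁻¹) *
            (Real.sqrt (gbinom (Fintype.card K) (n:ℤ) (l:ℤ)) * u 0 ⟨0, h0⟩ ⊥) from by ring,
        mul_inv_cancel₀ hsk, one_mul]
    · rw [if_neg h, if_neg h, mul_zero]
  · -- ===================== case i ≥ 1 =====================
    have hi1 : 1 ≤ i := Nat.one_le_iff_ne_zero.mpr hi0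
    have hin : i ≤ n := by omega
    rw [if_neg hi0, zero_mul, zero_mul, zero_smul]
    have hsupp : ∀ x : Submodule K V, Module.finrank K ↥x ≠ i → u i r x = 0 :=
      fun x hx => Usub_apply_eq_zero (humem i hi r) hx
    have hWu : (Wmat K V ((i:ℤ) - 1) (i:ℤ)).mulVec (u i r) = 0 := Usub_W (humem i hi r)
    have hMq : (0:ℝ) < gbinom (Fintype.card K) (i:ℤ) ((i-1:ℕ):ℤ) := gbinom_pos hqR (by omega)
    have hM : ∀ x' : Submodule K V,
        (∑ z : Submodule K V, Wmat K V ((i:ℤ)-1) (i:ℤ) z x') * u i r x'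
        = gbinom (Fintype.card K) (i:ℤ) ((i-1:ℕ):ℤ) * u i r x' := by
      intro x'
      by_cases hx' : Module.finrank K ↥x' = i
      · congr 1
        have hcast : ((i:ℤ) - 1) = (((i-1:ℕ)):ℤ) := by omega
        rw [hcast, col_sum_W_le (i-1) i (by omega) x' hx']
        rw [Nat.card_congr (subspacesLeEquiv x' (i-1))]
        have hcs := card_subspaces (K := K) (W := ↥x') (m := i - 1) (by rw [hx']; omega)
        rw [hx'] at hcs
        exact hcs
      · rw [hsupp x' hx', mul_zero, mul_zero]
    have hSigma : ∑ x' : Submodule K V, u i r x' = 0 := by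
      have h1 : (0:ℝ) = ∑ z : Submodule K V, ((Wmat K V ((i:ℤ)-1) (i:ℤ)).mulVec (u i r)) z := by
        rw [hWu]
        simp
      rw [_root_.sum_mulVec, Finset.sum_congr rfl (fun x' _ => hM x'), ← Finset.mul_sum] at h1
      rcases mul_eq_zero.mp h1.symm with h | h
      · exact absurd h hMq.ne'
      · exact h
    have hN : ∀ x' : Submodule K V,
        (∑ z : Submodule K V, Wmat K V (l:ℤ) (i:ℤ) z x') * u i r x'
        = gbinom (Fintype.card K) ((n-i:ℕ):ℤ) ((l-i:ℕ):ℤ) * u i r x' := by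
      intro x'
      by_cases hx' : Module.finrank K ↥x' = i
      · congr 1
        rw [col_sum_W_ge l i hil x' hx']
        have e : Nat.card {z : Submodule K V // x' ≤ z ∧ Module.finrank K ↥z = l}
            = Nat.card {w : Submodule K (V ⧸ x') // Module.finrank K ↥w = l - i} := by
          rw [← Nat.card_congr (superspacesEquiv x' (l-i))]
          refine Nat.card_congr (Equiv.subtypeEquivRight (fun z => ?_))
          rw [hx']
          constructor
          · rintro ⟨h1, h2⟩
            exact ⟨h1, by omega⟩
          · rintro ⟨h1, h2⟩
            exact ⟨h1, by omega⟩
        rw [e]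
        have hqr : Module.finrank K (V ⧸ x') = n - i := by
          have hh := Submodule.finrank_quotient_add_finrank x'
          rw [hx', hV] at hh
          omega
        have hcs := card_subspaces (K := K) (W := V ⧸ x') (m := l - i) (by rw [hqr]; omega)
        rw [hqr] at hcs
        exact hcs
      · rw [hsupp x' hx', mul_zero, mul_zero]
    have hT : ∑ z : Submodule K V, (if (Module.finrank K ↥z : ℤ) = (l:ℤ) then
        ((Wmat K V (l:ℤ) (i:ℤ)).mulVec (u i r)) z else 0) = 0 := by
      have hdrop : ∀ z : Submodule K V, (if (Module.finrank K ↥z : ℤ) = (l:ℤ) then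
          ((Wmat K V (l:ℤ) (i:ℤ)).mulVec (u i r)) z else 0)
          = ((Wmat K V (l:ℤ) (i:ℤ)).mulVec (u i r)) z := by
        intro z
        by_cases hz : (Module.finrank K ↥z : ℤ) = (l:ℤ)
        · rw [if_pos hz]
        · rw [if_neg hz]
          symm
          simp only [Matrix.mulVec, dotProduct]
          refine Finset.sum_eq_zero fun x' _ => ?_
          unfold Wmat
          rw [Matrix.of_apply, if_neg (fun hcc => hz hcc.1), zero_mul]
      rw [Finset.sum_congr rfl (fun z _ => hdrop z), _root_.sum_mulVec,
        Finset.sum_congr rfl (fun x' _ => hN x'), ← Finset.mul_sum, hSigma, mul_zero]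
    have hulift : ulift' K V (Fintype.card K) n i l (u i r) =
        ((Real.sqrt (Fintype.card K)) ^ (-(i * ((l : ℤ) - i))) *
          (Real.sqrt (gbinom (Fintype.card K) ((n : ℤ) - 2 * i) ((l : ℤ) - i)))⁻¹) •
          (Wmat K V l i).mulVec (u i r) := by
      unfold ulift'
      rw [if_pos ⟨hil, hln⟩]
    funext x
    rw [JJmat_mulVec, hulift]
    simp only [Pi.zero_apply]
    set s : ℝ := (Real.sqrt (Fintype.card K)) ^ (-(i * ((l : ℤ) - i))) *
      (Real.sqrt (gbinom (Fintype.card K) ((n : ℤ) - 2 * i) ((l : ℤ) - i)))⁻¹ with hs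
    have hterm : ∀ z : Submodule K V, (if (Module.finrank K ↥z : ℤ) = (l:ℤ) then
        (s • (Wmat K V (l:ℤ) (i:ℤ)).mulVec (u i r)) z else 0)
        = s * (if (Module.finrank K ↥z : ℤ) = (l:ℤ) then
          ((Wmat K V (l:ℤ) (i:ℤ)).mulVec (u i r)) z else 0) := by
      intro z
      by_cases hz : (Module.finrank K ↥z : ℤ) = (l:ℤ) <;> simp [hz]
    rw [Finset.sum_congr rfl (fun z _ => hterm z), ← Finset.mul_sum, hT, mul_zero]
    simp
end

section
/- Let 1 ≤ ℓ < k ≤ n, let F ⊆ L_k(V) and G ⊆ L_ℓ(V) be nonempty cross-intersecting families with characteristic vectors φ, ψ ∈ ℝ^{L(V)}, and set X = (φ/‖φ‖ + ψ/‖ψ‖)(φ/‖φ‖ + ψ/‖ψ‖)ᵀ. Then X is symmetric positive semidefinite with all entries nonnegative, I_k • X = I_ℓ • X = 1, (W̄_{k,ℓ} + W̄_{ℓ,k}) • X = 0, and ½(J_{k,ℓ} + J_{ℓ,k}) • X = |F|^{1/2} |G|^{1/2}. -/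
open Matrix

open Classical in
/-- The matrix `W̄_{k,ℓ}`: `(W̄_{k,ℓ})_{x,y} = 1` if `dim x = k`, `dim y = ℓ` and `x ⊓ y = ⊥`,
and `0` otherwise. -/
noncomputable def Wbarmat (K V : Type*) [Field K] [AddCommGroup V] [Module K V] (k l : ℤ) :
    Matrix (Submodule K V) (Submodule K V) ℝ :=
  Matrix.of fun x y =>
    if (Module.finrank K x : ℤ) = k ∧ (Module.finrank K y : ℤ) = l ∧ x ⊓ y = ⊥ then 1 else 0

/-- The Frobenius pairing `Y • Z = trace (Yᵀ Z)`. -/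
noncomputable def mdot {ι : Type*} [Fintype ι] (Y Z : Matrix ι ι ℝ) : ℝ :=
  (Yᵀ * Z).trace


lemma mdot_eq {ι : Type*} [Fintype ι] (Y Z : Matrix ι ι ℝ) :
    mdot Y Z = ∑ i, ∑ j, Y i j * Z i j := by
  simp only [mdot, Matrix.trace, Matrix.diag, Matrix.mul_apply, Matrix.transpose_apply]
  rw [Finset.sum_comm]

open Classical in
lemma Wmat_diag_apply {K V : Type*} [Field K] [AddCommGroup V] [Module K V]
    [FiniteDimensional K V] (a : ℤ) (x y : Submodule K V) :
    Wmat K V a a x y = if x = y ∧ (Module.finrank K x : ℤ) = a then 1 else 0 := by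
  have h : ((Module.finrank K x : ℤ) = a ∧ (Module.finrank K y : ℤ) = a ∧
      (Module.finrank K ↥(x ⊓ y) : ℤ) = min a a) ↔ (x = y ∧ (Module.finrank K x : ℤ) = a) := by
    constructor
    · rintro ⟨h1, h2, h3⟩
      rw [min_self] at h3
      have e1 : x ⊓ y = x := Submodule.eq_of_le_of_finrank_eq inf_le_left (by omega)
      have e2 : x ⊓ y = y := Submodule.eq_of_le_of_finrank_eq inf_le_right (by omega)
      exact ⟨e1 ▸ e2, h1⟩
    · rintro ⟨rfl, h⟩
      refine ⟨h, h, ?_⟩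
      rw [min_self, inf_idem]
      exact h
  simp only [Wmat, Matrix.of_apply]
  rw [if_congr h rfl rfl]

lemma sum_diag_ite {ι : Type*} [Fintype ι] [DecidableEq ι] (P : ι → Prop) [DecidablePred P]
    (f : ι → ι → ℝ) :
    ∑ x, ∑ y, (if x = y ∧ P x then (1:ℝ) else 0) * f x y = ∑ x, if P x then f x x else 0 := by
  refine Finset.sum_congr rfl fun x _ => ?_
  have h : ∀ y, (if x = y ∧ P x then (1:ℝ) else 0) * f x y
      = if y = x then (if P x then f x x else 0) else 0 := by
    intro y
    by_cases hy : y = x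
    · simp only [hy, true_and, if_pos rfl]
      split <;> simp
    · simp [hy, Ne.symm hy]
  rw [Finset.sum_congr rfl fun y _ => h y, Finset.sum_ite_eq' Finset.univ x]
  simp

open Classical in
/-- **The primal feasible solution.** For nonempty cross-intersecting families `F`, `G`
with characteristic vectors `φ`, `ψ`, the rank-one matrix
`X = (φ/‖φ‖ + ψ/‖ψ‖)(φ/‖φ‖ + ψ/‖ψ‖)ᵀ` is symmetric PSD with nonnegative entries, satisfies
`I_k • X = I_ℓ • X = 1`, `(W̄_{k,ℓ} + W̄_{ℓ,k}) • X = 0`, and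
`½(J_{k,ℓ} + J_{ℓ,k}) • X = |F|^{1/2} |G|^{1/2}`. -/
theorem primal_feasible
    {K V : Type*} [Field K] [Fintype K] [AddCommGroup V] [Module K V] [FiniteDimensional K V]
    [Fintype (Submodule K V)]
    (n k l : ℕ) (hV : Module.finrank K V = n)
    (hl1 : 1 ≤ l) (hlk : l < k) (hkn : k ≤ n)
    (F G : Finset (Submodule K V)) (hFne : F.Nonempty) (hGne : G.Nonempty)
    (hF : ∀ x ∈ F, Module.finrank K x = k)
    (hG : ∀ y ∈ G, Module.finrank K y = l)
    (hcross : ∀ x ∈ F, ∀ y ∈ G, x ⊓ y ≠ ⊥) :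
    let φ : Submodule K V → ℝ := fun x => if x ∈ F then 1 else 0
    let ψ : Submodule K V → ℝ := fun y => if y ∈ G then 1 else 0
    let w : Submodule K V → ℝ :=
      (Real.sqrt (φ ⬝ᵥ φ))⁻¹ • φ + (Real.sqrt (ψ ⬝ᵥ ψ))⁻¹ • ψ
    let X : Matrix (Submodule K V) (Submodule K V) ℝ := Matrix.vecMulVec w w
    X.PosSemidef ∧ (∀ x y, 0 ≤ X x y) ∧
      mdot (Wmat K V k k) X = 1 ∧ mdot (Wmat K V l l) X = 1 ∧
      mdot (Wbarmat K V k l + Wbarmat K V l k) X = 0 ∧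
      mdot ((1 / 2 : ℝ) • (JJmat K V k l + JJmat K V l k)) X =
        Real.sqrt F.card * Real.sqrt G.card := by
    classical
  intro φ ψ w X
  -- basic facts about the characteristic vectors
  have hφ01 : ∀ x, φ x = 0 ∨ φ x = 1 := by
    intro x; by_cases h : x ∈ F <;> simp [φ, h]
  have hψ01 : ∀ x, ψ x = 0 ∨ ψ x = 1 := by
    intro x; by_cases h : x ∈ G <;> simp [ψ, h]
  have hφφ : φ ⬝ᵥ φ = (F.card : ℝ) := by
    simp only [dotProduct, φ]
    rw [Finset.sum_congr rfl (fun x _ => by split <;> norm_num : ∀ x ∈ Finset.univ,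
      (if x ∈ F then (1:ℝ) else 0) * (if x ∈ F then 1 else 0) = if x ∈ F then 1 else 0)]
    simp [Finset.sum_boole]
  have hψψ : ψ ⬝ᵥ ψ = (G.card : ℝ) := by
    simp only [dotProduct, ψ]
    rw [Finset.sum_congr rfl (fun x _ => by split <;> norm_num : ∀ x ∈ Finset.univ,
      (if x ∈ G then (1:ℝ) else 0) * (if x ∈ G then 1 else 0) = if x ∈ G then 1 else 0)]
    simp [Finset.sum_boole]
  set sF : ℝ := Real.sqrt (F.card) with hsFdef
  set sG : ℝ := Real.sqrt (G.card) with hsGdef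
  have hFpos : (0:ℝ) < F.card := by exact_mod_cast hFne.card_pos
  have hGpos : (0:ℝ) < G.card := by exact_mod_cast hGne.card_pos
  have hsF : 0 < sF := Real.sqrt_pos.2 hFpos
  have hsG : 0 < sG := Real.sqrt_pos.2 hGpos
  have hsF2 : sF * sF = (F.card : ℝ) := Real.mul_self_sqrt hFpos.le
  have hsG2 : sG * sG = (G.card : ℝ) := Real.mul_self_sqrt hGpos.le
  have hw : ∀ x, w x = sF⁻¹ * φ x + sG⁻¹ * ψ x := by
    intro x
    simp [w, hφφ, hψψ, hsFdef, hsGdef]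
  have hw0 : ∀ x, 0 ≤ w x := by
    intro x
    rw [hw x]
    have h1 : (0:ℝ) ≤ φ x := by rcases hφ01 x with h | h <;> rw [h] <;> norm_num
    have h2 : (0:ℝ) ≤ ψ x := by rcases hψ01 x with h | h <;> rw [h] <;> norm_num
    positivity
  have hXapp : ∀ x y, X x y = w x * w y := fun x y => rfl
  -- the vanishing facts
  have hψk : ∀ x : Submodule K V, (Module.finrank K x : ℤ) = (k:ℤ) → ψ x = 0 := by
    intro x hx
    have : x ∉ G := fun h => by have := hG x h; omega
    simp [ψ, this]
  have hφl : ∀ x : Submodule K V, (Module.finrank K x : ℤ) = (l:ℤ) → φ x = 0 := by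
    intro x hx
    have : x ∉ F := fun h => by have := hF x h; omega
    simp [φ, this]
  have hwk : ∀ x : Submodule K V,
      (if (Module.finrank K x : ℤ) = (k:ℤ) then w x else 0) = sF⁻¹ * φ x := by
    intro x
    by_cases hx : (Module.finrank K x : ℤ) = (k:ℤ)
    · rw [if_pos hx, hw x, hψk x hx]; ring
    · rw [if_neg hx]
      have : x ∉ F := fun h => hx (by exact_mod_cast congrArg (Nat.cast (R := ℤ)) (hF x h))
      simp [φ, this]
  have hwl : ∀ x : Submodule K V,
      (if (Module.finrank K x : ℤ) = (l:ℤ) then w x else 0) = sG⁻¹ * ψ x := by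
    intro x
    by_cases hx : (Module.finrank K x : ℤ) = (l:ℤ)
    · rw [if_pos hx, hw x, hφl x hx]; ring
    · rw [if_neg hx]
      have : x ∉ G := fun h => hx (by exact_mod_cast congrArg (Nat.cast (R := ℤ)) (hG x h))
      simp [ψ, this]
  have hsumφ : ∑ x : Submodule K V, φ x = (F.card : ℝ) := by
    simp [φ, Finset.sum_boole]
  have hsumψ : ∑ x : Submodule K V, ψ x = (G.card : ℝ) := by
    simp [ψ, Finset.sum_boole]
  refine ⟨Matrix.posSemidef_iff_dotProduct_mulVec.mpr ⟨?_, ?_⟩, ?_, ?_, ?_, ?_, ?_⟩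
  · -- Hermitian
    ext i j
    simp [X, Matrix.conjTranspose_apply, Matrix.vecMulVec_apply, mul_comm]
  · -- PSD quadratic form
    intro v
    have h : star v ⬝ᵥ (X *ᵥ v) = (w ⬝ᵥ v) * (w ⬝ᵥ v) := by
      simp only [dotProduct, Matrix.mulVec, Matrix.vecMulVec_apply, Pi.star_apply,
        star_trivial, X]
      rw [Finset.sum_mul_sum]
      refine Finset.sum_congr rfl fun i _ => ?_
      rw [Finset.mul_sum]
      refine Finset.sum_congr rfl fun j _ => ?_
      ring
    rw [h]
    exact mul_self_nonneg _
  · -- nonnegativity of entries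
    intro x y
    rw [hXapp]
    exact mul_nonneg (hw0 x) (hw0 y)
  · -- I_k • X = 1
    rw [mdot_eq]
    rw [Finset.sum_congr rfl fun x _ => Finset.sum_congr rfl fun y _ => by
      rw [Wmat_diag_apply]]
    refine Eq.trans (b := ∑ x : Submodule K V, if (Module.finrank K x : ℤ) = (k:ℤ) then X x x else 0) ?_ ?_
    · convert sum_diag_ite (fun x : Submodule K V => (Module.finrank K x : ℤ) = (k:ℤ)) X
    have : ∀ x : Submodule K V,
        (if (Module.finrank K x : ℤ) = (k:ℤ) then X x x else 0)
          = (sF⁻¹ * φ x) * (sF⁻¹ * φ x) := by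
      intro x
      rw [← hwk x, hXapp]
      split <;> simp
    rw [Finset.sum_congr rfl fun x _ => this x]
    have : ∀ x : Submodule K V, (sF⁻¹ * φ x) * (sF⁻¹ * φ x) = sF⁻¹ * sF⁻¹ * φ x := by
      intro x
      rcases hφ01 x with h | h <;> rw [h] <;> ring
    rw [Finset.sum_congr rfl fun x _ => this x, ← Finset.mul_sum, hsumφ, ← hsF2]
    field_simp
  · -- I_l • X = 1
    rw [mdot_eq]
    rw [Finset.sum_congr rfl fun x _ => Finset.sum_congr rfl fun y _ => by
      rw [Wmat_diag_apply]]
    refine Eq.trans (b := ∑ x : Submodule K V, if (Module.finrank K x : ℤ) = (l:ℤ) then X x x else 0) ?_ ?_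
    · convert sum_diag_ite (fun x : Submodule K V => (Module.finrank K x : ℤ) = (l:ℤ)) X
    have : ∀ x : Submodule K V,
        (if (Module.finrank K x : ℤ) = (l:ℤ) then X x x else 0)
          = (sG⁻¹ * ψ x) * (sG⁻¹ * ψ x) := by
      intro x
      rw [← hwl x, hXapp]
      split <;> simp
    rw [Finset.sum_congr rfl fun x _ => this x]
    have : ∀ x : Submodule K V, (sG⁻¹ * ψ x) * (sG⁻¹ * ψ x) = sG⁻¹ * sG⁻¹ * ψ x := by
      intro x
      rcases hψ01 x with h | h <;> rw [h] <;> ring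
    rw [Finset.sum_congr rfl fun x _ => this x, ← Finset.mul_sum, hsumψ, ← hsG2]
    field_simp
  · -- Wbar part
    have hX0 : ∀ x y : Submodule K V, (Module.finrank K x : ℤ) = (k:ℤ) →
        (Module.finrank K y : ℤ) = (l:ℤ) → x ⊓ y = ⊥ → X x y = 0 := by
      intro x y hx hy hb
      have hφψ : φ x * ψ y = 0 := by
        by_cases hxF : x ∈ F
        · by_cases hyG : y ∈ G
          · exact absurd hb (hcross x hxF y hyG)
          · simp [ψ, hyG]
        · simp [φ, hxF]
      rw [hXapp, hw x, hw y, hψk x hx, hφl y hy]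
      calc (sF⁻¹ * φ x + sG⁻¹ * 0) * (sF⁻¹ * 0 + sG⁻¹ * ψ y)
          = sF⁻¹ * sG⁻¹ * (φ x * ψ y) := by ring
        _ = 0 := by rw [hφψ]; ring
    rw [mdot_eq]
    refine Finset.sum_eq_zero fun x _ => Finset.sum_eq_zero fun y _ => ?_
    simp only [Matrix.add_apply, Wbarmat, Matrix.of_apply]
    rcases Classical.em ((Module.finrank K x : ℤ) = (k:ℤ) ∧ (Module.finrank K y : ℤ) = (l:ℤ)
        ∧ x ⊓ y = ⊥) with h1 | h1
    · rcases Classical.em ((Module.finrank K x : ℤ) = (l:ℤ)) with h2 | h2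
      · omega
      · rw [if_pos h1, if_neg (fun h => h2 h.1), hX0 x y h1.1 h1.2.1 h1.2.2]; ring
    · rcases Classical.em ((Module.finrank K x : ℤ) = (l:ℤ) ∧
          (Module.finrank K y : ℤ) = (k:ℤ) ∧ x ⊓ y = ⊥) with h2 | h2
      · rw [if_neg h1, if_pos h2]
        have hyx : y ⊓ x = ⊥ := by rw [inf_comm] at h2; exact h2.2.2
        have : X x y = 0 := by
          rw [hXapp, mul_comm, ← hXapp]
          exact hX0 y x h2.2.1 h2.1 hyx
        rw [this]; ring
      · rw [if_neg h1, if_neg h2]; ring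
  · -- JJ part
    have hJJapp : ∀ (a b : ℤ) (x y : Submodule K V), JJmat K V a b x y
        = (if (Module.finrank K x : ℤ) = a then (1:ℝ) else 0)
          * (if (Module.finrank K y : ℤ) = b then (1:ℝ) else 0) := by
      intro a b x y
      simp only [JJmat, Matrix.mul_apply, Jmat, Matrix.of_apply, Wmat_diag_apply]
      simp only [mul_one, ite_and, Finset.sum_ite_eq, Finset.mem_univ, if_true,
        ← Finset.mul_sum, Finset.sum_ite_eq']
    rw [mdot_eq]
    have hterm : ∀ x y : Submodule K V,
        ((1 / 2 : ℝ) • (JJmat K V k l + JJmat K V l k)) x y * X x y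
        = (1/2) * (((if (Module.finrank K x : ℤ) = (k:ℤ) then (1:ℝ) else 0) * w x)
              * ((if (Module.finrank K y : ℤ) = (l:ℤ) then (1:ℝ) else 0) * w y)
            + ((if (Module.finrank K x : ℤ) = (l:ℤ) then (1:ℝ) else 0) * w x)
              * ((if (Module.finrank K y : ℤ) = (k:ℤ) then (1:ℝ) else 0) * w y)) := by
      intro x y
      rw [hXapp]
      simp only [Matrix.smul_apply, Matrix.add_apply, hJJapp, smul_eq_mul]
      ring
    rw [Finset.sum_congr rfl fun x _ => Finset.sum_congr rfl fun y _ => hterm x y]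
    have hboole : ∀ (a : ℤ) (x : Submodule K V),
        (if (Module.finrank K x : ℤ) = a then (1:ℝ) else 0) * w x
        = if (Module.finrank K x : ℤ) = a then w x else 0 := by
      intro a x; split <;> simp
    have hSk : ∑ x : Submodule K V,
        (if (Module.finrank K x : ℤ) = (k:ℤ) then (1:ℝ) else 0) * w x = sF := by
      rw [Finset.sum_congr rfl fun x _ => (hboole _ x).trans (hwk x), ← Finset.mul_sum, hsumφ,
        ← hsF2]
      field_simp
    have hSl : ∑ x : Submodule K V,
        (if (Module.finrank K x : ℤ) = (l:ℤ) then (1:ℝ) else 0) * w x = sG := by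
      rw [Finset.sum_congr rfl fun x _ => (hboole _ x).trans (hwl x), ← Finset.mul_sum, hsumψ,
        ← hsG2]
      field_simp
    have hfact : ∑ x : Submodule K V, ∑ y : Submodule K V,
        (1/2 : ℝ) * (((if (Module.finrank K x : ℤ) = (k:ℤ) then (1:ℝ) else 0) * w x)
              * ((if (Module.finrank K y : ℤ) = (l:ℤ) then (1:ℝ) else 0) * w y)
            + ((if (Module.finrank K x : ℤ) = (l:ℤ) then (1:ℝ) else 0) * w x)
              * ((if (Module.finrank K y : ℤ) = (k:ℤ) then (1:ℝ) else 0) * w y))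
        = (1/2) * ((∑ x : Submodule K V,
              (if (Module.finrank K x : ℤ) = (k:ℤ) then (1:ℝ) else 0) * w x)
            * (∑ y : Submodule K V,
              (if (Module.finrank K y : ℤ) = (l:ℤ) then (1:ℝ) else 0) * w y)
          + (∑ x : Submodule K V,
              (if (Module.finrank K x : ℤ) = (l:ℤ) then (1:ℝ) else 0) * w x)
            * (∑ y : Submodule K V,
              (if (Module.finrank K y : ℤ) = (k:ℤ) then (1:ℝ) else 0) * w y)) := by
      rw [Finset.sum_mul_sum, Finset.sum_mul_sum, ← Finset.sum_add_distrib, Finset.mul_sum]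
      refine Finset.sum_congr rfl fun x _ => ?_
      rw [← Finset.sum_add_distrib, Finset.mul_sum]
    rw [hfact, hSk, hSl]
    ring
end

section
/- Let 1 ≤ ℓ < k ≤ n/2. For i = 2,…,ℓ one has (θ_i^{k,ℓ} b(0))² ≤ (θ_2^{k,ℓ} b(0))² = ¼ q^{2−2k} ((q^{k−1}−1)/(q^{n−k−1}−1)) ((q^{ℓ−1}−1)/(q^{n−ℓ−1}−1)) ((q^{n−ℓ}−1)/(q^{n−k}−1)) [n−1 choose k−1]_q [n−1 choose ℓ−1]_q, and (θ_i^{k,ℓ} b(0))² < (1/(4q)) [n−1 choose k−1]_q [n−1 choose ℓ−1]_q. -/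
/-- The eigenvalue
`θ_i^{k,ℓ} = (-1)^i q^{C(i,2) + kℓ - i(k+ℓ)/2} [n-k-i choose ℓ-i] [n-2i choose k-i]^{1/2}
[n-2i choose ℓ-i]^{-1/2}` for `i ≤ k ≤ n - i`, and `0` if `k < i` or `k > n - i`.
(The half-integer power of `q` is expressed via `√q`.) -/
noncomputable def theta (q : ℝ) (n i k l : ℕ) : ℝ :=
  if i ≤ k ∧ k ≤ n - i then
    (-1) ^ i * (Real.sqrt q) ^ ((i * (i - 1) : ℤ) + 2 * k * l - i * (k + l)) *
      gbinom q ((n : ℤ) - k - i) ((l : ℤ) - i) *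
      Real.sqrt (gbinom q ((n : ℤ) - 2 * i) ((k : ℤ) - i)) *
      (Real.sqrt (gbinom q ((n : ℤ) - 2 * i) ((l : ℤ) - i)))⁻¹
  else 0

/-- `b(λ)`, defined by
`q^{kℓ}[n-k choose ℓ] b(λ) = -½ q^ℓ [n-1 choose ℓ]
- q^{ℓ²}[n-ℓ choose ℓ][n-1 choose ℓ-1]^{1/2}[n-1 choose k-1]^{-1/2} λ`. -/
noncomputable def bF (q : ℝ) (n k l : ℕ) (lam : ℝ) : ℝ :=
  (-(1 / 2) * q ^ l * gbinom q ((n : ℤ) - 1) l -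
    q ^ (l ^ 2) * gbinom q ((n : ℤ) - l) l *
      Real.sqrt (gbinom q ((n : ℤ) - 1) ((l : ℤ) - 1)) *
      (Real.sqrt (gbinom q ((n : ℤ) - 1) ((k : ℤ) - 1)))⁻¹ * lam) /
  (q ^ (k * l) * gbinom q ((n : ℤ) - k) l)

namespace ThetaAux

noncomputable def qpoch (q : ℝ) (m : ℕ) : ℝ := ∏ j ∈ Finset.range m, (q ^ (j + 1) - 1)

lemma qpoch_pos {q : ℝ} (hq : 1 < q) (m : ℕ) : 0 < qpoch q m := by
  refine Finset.prod_pos fun j _ => ?_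
  have : 1 < q ^ (j + 1) := one_lt_pow₀ hq (by omega)
  linarith

lemma qpoch_ne {q : ℝ} (hq : 1 < q) (m : ℕ) : qpoch q m ≠ 0 := (qpoch_pos hq m).ne'

lemma qpoch_succ (q : ℝ) (m : ℕ) : qpoch q (m + 1) = qpoch q m * (q ^ (m + 1) - 1) :=
  Finset.prod_range_succ _ m

lemma qpoch_eq (q : ℝ) {m m' : ℕ} (h : m = m' + 1) :
    qpoch q m = qpoch q m' * (q ^ m - 1) := by
  rw [h, qpoch_succ]

lemma prod_sub_one {q : ℝ} (hq : 1 < q) {a b : ℕ} (hba : b ≤ a) :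
    ∏ i ∈ Finset.range b, (q ^ ((a : ℤ) - i) - 1) = qpoch q a / qpoch q (a - b) := by
  obtain ⟨c, rfl⟩ : ∃ c, a = c + b := ⟨a - b, by omega⟩
  have h1 : ∀ i ∈ Finset.range b,
      q ^ ((↑(c + b) : ℤ) - i) - 1 = (fun j => q ^ (c + 1 + j) - 1) (b - 1 - i) := by
    intro i hi
    simp only [Finset.mem_range] at hi
    rw [show ((↑(c + b) : ℤ) - i) = ((c + 1 + (b - 1 - i) : ℕ) : ℤ) by omega, zpow_natCast]
  rw [Finset.prod_congr rfl h1, Finset.prod_range_reflect (fun j => q ^ (c + 1 + j) - 1) b]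
  have h2 : qpoch q (c + b) = qpoch q c * ∏ j ∈ Finset.range b, (q ^ (c + 1 + j) - 1) := by
    rw [qpoch, Finset.prod_range_add]
    congr 1
    exact Finset.prod_congr rfl fun j _ => by rw [show c + j + 1 = c + 1 + j from by omega]
  rw [show c + b - b = c from by omega, h2]
  field_simp [qpoch_ne hq]

lemma gbinom_nat {q : ℝ} (hq : 1 < q) {a b : ℕ} (hba : b ≤ a) :
    gbinom q a b = qpoch q a / (qpoch q b * qpoch q (a - b)) := by
  rw [gbinom, if_pos ⟨Int.natCast_nonneg a, Int.natCast_nonneg b⟩, Int.toNat_natCast,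
    Finset.prod_div_distrib, prod_sub_one hq hba, prod_sub_one hq (le_refl b), Nat.sub_self]
  have h0 : qpoch q 0 = 1 := by simp [qpoch]
  rw [h0]
  rw [div_one, div_div, mul_comm]


lemma gbinom_pos {q : ℝ} (hq : 1 < q) {a b : ℕ} (hba : b ≤ a) : 0 < gbinom q a b := by
  rw [gbinom_nat hq hba]
  exact div_pos (qpoch_pos hq a) (mul_pos (qpoch_pos hq b) (qpoch_pos hq (a - b)))

set_option maxHeartbeats 1000000 in
lemma Tval {q : ℝ} (hq : 1 < q) {n k l i : ℕ} (hi2 : 2 ≤ i) (hil : i ≤ l) (hlk : l < k)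
    (hkn : 2 * k ≤ n) :
    (theta q n i k l * bF q n k l 0) ^ 2 =
      1 / 4 * q ^ (i * i + 2 * l) * (q ^ (i * (k + l) + i))⁻¹ *
        (qpoch q (n - k - i) * qpoch q (n - l - i) * qpoch q (n - 1) ^ 2) /
        (qpoch q (l - i) * qpoch q (k - i) * qpoch q (n - 1 - l) ^ 2 *
          qpoch q (n - k) ^ 2) := by
  have hq0 : (0 : ℝ) < q := by linarith
  have hik : i ≤ k := by omega
  have hkni : k ≤ n - i := by omega
  rw [theta, if_pos ⟨hik, hkni⟩, bF]
  simp only [mul_zero, sub_zero]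
  rw [show (n : ℤ) - k - i = ((n - k - i : ℕ) : ℤ) by omega,
      show (l : ℤ) - i = ((l - i : ℕ) : ℤ) by omega,
      show (n : ℤ) - 2 * i = ((n - 2 * i : ℕ) : ℤ) by omega,
      show (k : ℤ) - i = ((k - i : ℕ) : ℤ) by omega,
      show (n : ℤ) - 1 = ((n - 1 : ℕ) : ℤ) by omega,
      show (n : ℤ) - k = ((n - k : ℕ) : ℤ) by omega]
  rw [gbinom_nat hq (show l - i ≤ n - k - i by omega),
      gbinom_nat hq (show k - i ≤ n - 2 * i by omega),
      gbinom_nat hq (show l - i ≤ n - 2 * i by omega),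
      gbinom_nat hq (show l ≤ n - 1 by omega),
      gbinom_nat hq (show l ≤ n - k by omega)]
  rw [show n - k - i - (l - i) = n - k - l from by omega,
      show n - 2 * i - (k - i) = n - k - i from by omega,
      show n - 2 * i - (l - i) = n - l - i from by omega]
  have hBpos : (0:ℝ) ≤ qpoch q (n - 2 * i) / (qpoch q (k - i) * qpoch q (n - k - i)) :=
    le_of_lt (div_pos (qpoch_pos hq _) (mul_pos (qpoch_pos hq _) (qpoch_pos hq _)))
  have hCpos : (0:ℝ) ≤ qpoch q (n - 2 * i) / (qpoch q (l - i) * qpoch q (n - l - i)) :=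
    le_of_lt (div_pos (qpoch_pos hq _) (mul_pos (qpoch_pos hq _) (qpoch_pos hq _)))
  have hS : ∀ m : ℤ, (Real.sqrt q ^ m) ^ 2 = q ^ m := by
    intro m
    have h0 : Real.sqrt q ≠ 0 := by positivity
    rw [pow_two, ← zpow_add₀ h0, ← two_mul, zpow_mul, zpow_two, Real.mul_self_sqrt hq0.le]
  simp only [mul_pow, div_pow, inv_pow]
  rw [Real.sq_sqrt hBpos, Real.sq_sqrt hCpos, hS,
      show ((i : ℤ) * ((i : ℤ) - 1) + 2 * k * l - i * (k + l)) =
        ((i * i + 2 * k * l : ℕ) : ℤ) - ((i * (k + l) + i : ℕ) : ℤ) from by push_cast; ring,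
      zpow_sub₀ hq0.ne', zpow_natCast, zpow_natCast,
      show ((-1 : ℝ) ^ i) ^ 2 = 1 from by
        rw [← pow_mul, mul_comm, pow_mul, neg_one_sq, one_pow]]
  have e1 := qpoch_ne hq (n - k - i)
  have e2 := qpoch_ne hq (n - l - i)
  have e3 := qpoch_ne hq (n - 1)
  have e4 := qpoch_ne hq (l - i)
  have e5 := qpoch_ne hq (k - i)
  have e6 := qpoch_ne hq (n - 1 - l)
  have e7 := qpoch_ne hq (n - k)
  have e8 := qpoch_ne hq (n - k - l)
  have e9 := qpoch_ne hq (n - 2 * i)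
  have e10 := qpoch_ne hq l
  field_simp
  ring

lemma pow_sub_one_le {q : ℝ} (hq2 : 2 ≤ q) {m : ℕ} (hm : 1 ≤ m) : q ^ (m - 1) ≤ q ^ m - 1 := by
  have h : q ^ m = q ^ (m - 1) * q := by rw [← pow_succ, show m - 1 + 1 = m from by omega]
  have h1 : (1 : ℝ) ≤ q ^ (m - 1) := one_le_pow₀ (by linarith)
  nlinarith

set_option maxHeartbeats 1000000 in
lemma Tstep {q : ℝ} (hq2 : 2 ≤ q) {n k l i : ℕ} (hi2 : 2 ≤ i) (hil : i + 1 ≤ l) (hlk : l < k)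
    (hkn : 2 * k ≤ n) :
    (theta q n (i + 1) k l * bF q n k l 0) ^ 2 ≤ (theta q n i k l * bF q n k l 0) ^ 2 := by
  have hq : (1 : ℝ) < q := by linarith
  have hq0 : (0 : ℝ) < q := by linarith
  have key : (theta q n (i + 1) k l * bF q n k l 0) ^ 2 *
        (q ^ (k + l + 1) * ((q ^ (n - k - i) - 1) * (q ^ (n - l - i) - 1))) =
      (theta q n i k l * bF q n k l 0) ^ 2 *
        (q ^ (2 * i + 1) * ((q ^ (l - i) - 1) * (q ^ (k - i) - 1))) := by
    rw [Tval hq (by omega) hil hlk hkn, Tval hq hi2 (by omega) hlk hkn,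
        qpoch_eq q (show n - k - i = n - k - (i + 1) + 1 from by omega),
        qpoch_eq q (show n - l - i = n - l - (i + 1) + 1 from by omega),
        qpoch_eq q (show l - i = l - (i + 1) + 1 from by omega),
        qpoch_eq q (show k - i = k - (i + 1) + 1 from by omega)]
    have e1 := qpoch_ne hq (n - k - (i + 1))
    have e2 := qpoch_ne hq (n - l - (i + 1))
    have e3 := qpoch_ne hq (n - 1)
    have e4 := qpoch_ne hq (l - (i + 1))
    have e5 := qpoch_ne hq (k - (i + 1))
    have e6 := qpoch_ne hq (n - 1 - l)
    have e7 := qpoch_ne hq (n - k)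
    have g1 : q ^ (l - i) - 1 ≠ 0 := by
      nlinarith [one_lt_pow₀ hq (show l - i ≠ 0 by omega)]
    have g2 : q ^ (k - i) - 1 ≠ 0 := by
      nlinarith [one_lt_pow₀ hq (show k - i ≠ 0 by omega)]
    have g3 : q ^ (n - k - i) - 1 ≠ 0 := by
      nlinarith [one_lt_pow₀ hq (show n - k - i ≠ 0 by omega)]
    have g4 : q ^ (n - l - i) - 1 ≠ 0 := by
      nlinarith [one_lt_pow₀ hq (show n - l - i ≠ 0 by omega)]
    field_simp
    ring
  have b1 : (1 : ℝ) < q ^ (n - k - i) := one_lt_pow₀ hq (by omega)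
  have b2 : (1 : ℝ) < q ^ (n - l - i) := one_lt_pow₀ hq (by omega)
  have hX : (0 : ℝ) < q ^ (k + l + 1) * ((q ^ (n - k - i) - 1) * (q ^ (n - l - i) - 1)) :=
    mul_pos (pow_pos hq0 _) (mul_pos (by linarith) (by linarith))
  have hY : q ^ (2 * i + 1) * ((q ^ (l - i) - 1) * (q ^ (k - i) - 1)) ≤
      q ^ (k + l + 1) * ((q ^ (n - k - i) - 1) * (q ^ (n - l - i) - 1)) := by
    have c1 : (0 : ℝ) < q ^ (l - i) := pow_pos hq0 _
    have c2 : (0 : ℝ) < q ^ (k - i) := pow_pos hq0 _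
    have d1 : (2 : ℝ) ≤ q ^ (n - k - i) := le_trans hq2 (le_self_pow₀ (by linarith) (by omega))
    have d2 : (2 : ℝ) ≤ q ^ (n - l - i) := le_trans hq2 (le_self_pow₀ (by linarith) (by omega))
    calc q ^ (2 * i + 1) * ((q ^ (l - i) - 1) * (q ^ (k - i) - 1))
        ≤ q ^ (2 * i + 1) * (q ^ (l - i) * q ^ (k - i)) := by
          apply mul_le_mul_of_nonneg_left _ (le_of_lt (pow_pos hq0 _))
          apply mul_le_mul (by linarith) (by linarith) (by nlinarith [one_lt_pow₀ hq (show k - i ≠ 0 by omega)]) (by linarith)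
      _ = q ^ (2 * i + 1 + (l - i + (k - i))) := by rw [← pow_add, ← pow_add]
      _ = q ^ (k + l + 1) := by rw [show 2 * i + 1 + (l - i + (k - i)) = k + l + 1 from by omega]
      _ ≤ q ^ (k + l + 1) * ((q ^ (n - k - i) - 1) * (q ^ (n - l - i) - 1)) := by
          apply le_mul_of_one_le_right (le_of_lt (pow_pos hq0 _))
          nlinarith
  have hT : (0 : ℝ) ≤ (theta q n i k l * bF q n k l 0) ^ 2 := sq_nonneg _
  nlinarith [mul_nonneg hT (sub_nonneg.mpr hY), key, hX]

lemma T_le {q : ℝ} (hq2 : 2 ≤ q) {n k l : ℕ} (hlk : l < k) (hkn : 2 * k ≤ n)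
    (i : ℕ) (hi2 : 2 ≤ i) (hil : i ≤ l) :
    (theta q n i k l * bF q n k l 0) ^ 2 ≤ (theta q n 2 k l * bF q n k l 0) ^ 2 := by
  induction i, hi2 using Nat.le_induction with
  | base => exact le_refl _
  | succ m hm ih => exact le_trans (Tstep hq2 hm hil hlk hkn) (ih (by omega))

set_option maxHeartbeats 1000000 in
lemma T2_eq {q : ℝ} (hq : 1 < q) {n k l : ℕ} (hl2 : 2 ≤ l) (hlk : l < k) (hkn : 2 * k ≤ n) :
    (theta q n 2 k l * bF q n k l 0) ^ 2 =
      1 / 4 * q ^ ((2 : ℤ) - 2 * k) *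
        ((q ^ ((k : ℤ) - 1) - 1) / (q ^ ((n : ℤ) - k - 1) - 1)) *
        ((q ^ ((l : ℤ) - 1) - 1) / (q ^ ((n : ℤ) - l - 1) - 1)) *
        ((q ^ ((n : ℤ) - l) - 1) / (q ^ ((n : ℤ) - k) - 1)) *
        gbinom q ((n : ℤ) - 1) ((k : ℤ) - 1) *
        gbinom q ((n : ℤ) - 1) ((l : ℤ) - 1) := by
  have hq0 : (0 : ℝ) < q := by linarith
  rw [Tval hq le_rfl hl2 hlk hkn,
      show ((2 : ℤ) - 2 * k) = -(((2 * k - 2 : ℕ)) : ℤ) from by omega, zpow_neg,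
      show ((n : ℤ) - k - 1) = ((n - k - 1 : ℕ) : ℤ) from by omega,
      show ((n : ℤ) - l - 1) = ((n - l - 1 : ℕ) : ℤ) from by omega,
      show ((k : ℤ) - 1) = ((k - 1 : ℕ) : ℤ) from by omega,
      show ((l : ℤ) - 1) = ((l - 1 : ℕ) : ℤ) from by omega,
      show ((n : ℤ) - l) = ((n - l : ℕ) : ℤ) from by omega,
      show ((n : ℤ) - k) = ((n - k : ℕ) : ℤ) from by omega,
      show ((n : ℤ) - 1) = ((n - 1 : ℕ) : ℤ) from by omega]
  simp only [zpow_natCast]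
  rw [gbinom_nat hq (show k - 1 ≤ n - 1 by omega), gbinom_nat hq (show l - 1 ≤ n - 1 by omega),
      show n - 1 - (k - 1) = n - k from by omega, show n - 1 - (l - 1) = n - l from by omega,
      show n - 1 - l = n - l - 1 from by omega,
      qpoch_eq q (show k - 1 = k - 2 + 1 from by omega),
      qpoch_eq q (show l - 1 = l - 2 + 1 from by omega),
      qpoch_eq q (show n - l = n - l - 1 + 1 from by omega),
      qpoch_eq q (show n - k = n - k - 1 + 1 from by omega),
      qpoch_eq q (show n - l - 1 = n - l - 2 + 1 from by omega),
      qpoch_eq q (show n - k - 1 = n - k - 2 + 1 from by omega),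
      show 2 * (k + l) + 2 = 2 * k - 2 + (2 * l + 4) from by omega, pow_add]
  have e1 := qpoch_ne hq (n - k - 2)
  have e2 := qpoch_ne hq (n - l - 2)
  have e3 := qpoch_ne hq (n - 1)
  have e4 := qpoch_ne hq (l - 2)
  have e5 := qpoch_ne hq (k - 2)
  have f1 : q ^ (k - 1) - 1 ≠ 0 := by nlinarith [one_lt_pow₀ hq (show k - 1 ≠ 0 by omega)]
  have f2 : q ^ (l - 1) - 1 ≠ 0 := by nlinarith [one_lt_pow₀ hq (show l - 1 ≠ 0 by omega)]
  have f3 : q ^ (n - l) - 1 ≠ 0 := by nlinarith [one_lt_pow₀ hq (show n - l ≠ 0 by omega)]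
  have f4 : q ^ (n - l - 1) - 1 ≠ 0 := by nlinarith [one_lt_pow₀ hq (show n - l - 1 ≠ 0 by omega)]
  have f5 : q ^ (n - k) - 1 ≠ 0 := by nlinarith [one_lt_pow₀ hq (show n - k ≠ 0 by omega)]
  have f6 : q ^ (n - k - 1) - 1 ≠ 0 := by nlinarith [one_lt_pow₀ hq (show n - k - 1 ≠ 0 by omega)]
  field_simp
  ring

lemma T2_lt {q : ℝ} (hq2 : 2 ≤ q) {n k l : ℕ} (hl2 : 2 ≤ l) (hlk : l < k) (hkn : 2 * k ≤ n) :
    1 / 4 * q ^ ((2 : ℤ) - 2 * k) *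
        ((q ^ ((k : ℤ) - 1) - 1) / (q ^ ((n : ℤ) - k - 1) - 1)) *
        ((q ^ ((l : ℤ) - 1) - 1) / (q ^ ((n : ℤ) - l - 1) - 1)) *
        ((q ^ ((n : ℤ) - l) - 1) / (q ^ ((n : ℤ) - k) - 1)) *
        gbinom q ((n : ℤ) - 1) ((k : ℤ) - 1) * gbinom q ((n : ℤ) - 1) ((l : ℤ) - 1) <
      1 / (4 * q) * gbinom q ((n : ℤ) - 1) ((k : ℤ) - 1) *
        gbinom q ((n : ℤ) - 1) ((l : ℤ) - 1) := by
  have hq : (1 : ℝ) < q := by linarith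
  have hq0 : (0 : ℝ) < q := by linarith
  have hGk : 0 < gbinom q ((n : ℤ) - 1) ((k : ℤ) - 1) := by
    rw [show (n : ℤ) - 1 = ((n - 1 : ℕ) : ℤ) from by omega,
        show (k : ℤ) - 1 = ((k - 1 : ℕ) : ℤ) from by omega]
    exact gbinom_pos hq (by omega)
  have hGl : 0 < gbinom q ((n : ℤ) - 1) ((l : ℤ) - 1) := by
    rw [show (n : ℤ) - 1 = ((n - 1 : ℕ) : ℤ) from by omega,
        show (l : ℤ) - 1 = ((l - 1 : ℕ) : ℤ) from by omega]
    exact gbinom_pos hq (by omega)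
  have main : 1 / 4 * q ^ ((2 : ℤ) - 2 * k) *
        ((q ^ ((k : ℤ) - 1) - 1) / (q ^ ((n : ℤ) - k - 1) - 1)) *
        ((q ^ ((l : ℤ) - 1) - 1) / (q ^ ((n : ℤ) - l - 1) - 1)) *
        ((q ^ ((n : ℤ) - l) - 1) / (q ^ ((n : ℤ) - k) - 1)) < 1 / (4 * q) := by
    rw [show ((2 : ℤ) - 2 * k) = -(((2 * k - 2 : ℕ)) : ℤ) from by omega, zpow_neg,
        show ((n : ℤ) - k - 1) = ((n - k - 1 : ℕ) : ℤ) from by omega,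
        show ((n : ℤ) - l - 1) = ((n - l - 1 : ℕ) : ℤ) from by omega,
        show ((k : ℤ) - 1) = ((k - 1 : ℕ) : ℤ) from by omega,
        show ((l : ℤ) - 1) = ((l - 1 : ℕ) : ℤ) from by omega,
        show ((n : ℤ) - l) = ((n - l : ℕ) : ℤ) from by omega,
        show ((n : ℤ) - k) = ((n - k : ℕ) : ℤ) from by omega]
    simp only [zpow_natCast]
    have pa1 : (0:ℝ) < q ^ (k-1) - 1 := by nlinarith [one_lt_pow₀ hq (show k-1 ≠ 0 by omega)]
    have pa2 : (0:ℝ) < q ^ (l-1) - 1 := by nlinarith [one_lt_pow₀ hq (show l-1 ≠ 0 by omega)]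
    have pa3 : (0:ℝ) < q ^ (n-l) - 1 := by nlinarith [one_lt_pow₀ hq (show n-l ≠ 0 by omega)]
    have pb1 : (0:ℝ) < q ^ (n-k-1) - 1 := by
      nlinarith [one_lt_pow₀ hq (show n-k-1 ≠ 0 by omega)]
    have pb2 : (0:ℝ) < q ^ (n-l-1) - 1 := by
      nlinarith [one_lt_pow₀ hq (show n-l-1 ≠ 0 by omega)]
    have pb3 : (0:ℝ) < q ^ (n-k) - 1 := by nlinarith [one_lt_pow₀ hq (show n-k ≠ 0 by omega)]
    have h1 : 1 / 4 * (q ^ (2*k-2))⁻¹ * ((q^(k-1)-1) / (q^(n-k-1)-1)) *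
          ((q^(l-1)-1)/(q^(n-l-1)-1)) * ((q^(n-l)-1)/(q^(n-k)-1))
        = ((q^(k-1)-1) * ((q^(l-1)-1) * (q^(n-l)-1))) /
          (4 * (q^(2*k-2) * ((q^(n-k-1)-1) * ((q^(n-l-1)-1) * (q^(n-k)-1))))) := by
      field_simp
    have hden : (0:ℝ) < 4 * (q^(2*k-2) * ((q^(n-k-1)-1) * ((q^(n-l-1)-1) * (q^(n-k)-1)))) :=
      mul_pos (by norm_num) (mul_pos (pow_pos hq0 _) (mul_pos pb1 (mul_pos pb2 pb3)))
    have hden2 : (0:ℝ) < 4 * q := by linarith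
    rw [h1, div_lt_div_iff₀ hden hden2]
    have c1 : (q^(k-1)-1) * ((q^(l-1)-1) * (q^(n-l)-1)) * (4*q)
        < q^(k-1) * (q^(l-1) * q^(n-l)) * (4*q) := by
      apply mul_lt_mul_of_pos_right _ hden2
      exact mul_lt_mul'' (by linarith)
        (mul_lt_mul'' (by linarith) (by linarith) pa2.le pa3.le)
        pa1.le (mul_pos pa2 pa3).le
    have c2 : q^(k-1) * (q^(l-1) * q^(n-l)) * (4*q)
        = 4 * q^((k-1) + ((l-1) + ((n-l) + 1))) := by
      rw [pow_add, pow_add, pow_add, pow_one]; ring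
    have c3 : q^((k-1) + ((l-1) + ((n-l) + 1)))
        ≤ q^((2*k-2) + ((n-k-2) + ((n-l-2) + (n-k-1)))) :=
      pow_le_pow_right₀ (by linarith) (by omega)
    have c4 : q^((2*k-2) + ((n-k-2) + ((n-l-2) + (n-k-1))))
        = q^(2*k-2) * (q^(n-k-2) * (q^(n-l-2) * q^(n-k-1))) := by
      rw [pow_add, pow_add, pow_add]
    have d1 : q^(n-k-2) ≤ q^(n-k-1) - 1 := by
      have := pow_sub_one_le hq2 (show 1 ≤ n-k-1 by omega)
      rwa [show n-k-1-1 = n-k-2 from by omega] at this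
    have d2 : q^(n-l-2) ≤ q^(n-l-1) - 1 := by
      have := pow_sub_one_le hq2 (show 1 ≤ n-l-1 by omega)
      rwa [show n-l-1-1 = n-l-2 from by omega] at this
    have d3 : q^(n-k-1) ≤ q^(n-k) - 1 := pow_sub_one_le hq2 (show 1 ≤ n-k by omega)
    have c5 : q^(2*k-2) * (q^(n-k-2) * (q^(n-l-2) * q^(n-k-1)))
        ≤ q^(2*k-2) * ((q^(n-k-1)-1) * ((q^(n-l-1)-1) * (q^(n-k)-1))) := by
      apply mul_le_mul_of_nonneg_left _ (pow_pos hq0 _).le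
      exact mul_le_mul d1 (mul_le_mul d2 d3 (pow_pos hq0 _).le pb2.le)
        (mul_pos (pow_pos hq0 _) (pow_pos hq0 _)).le pb1.le
    linarith [c1, c2, c3, c4, c5]
  exact mul_lt_mul_of_pos_right (mul_lt_mul_of_pos_right main hGk) hGl

end ThetaAux

/-- **Evaluation of `(θ_i^{k,ℓ} b(0))²`.** For `1 ≤ ℓ < k ≤ n/2` and `2 ≤ i ≤ ℓ`:
`(θ_i^{k,ℓ} b(0))² ≤ (θ_2^{k,ℓ} b(0))²
 = ¼ q^{2-2k} ((q^{k-1}-1)/(q^{n-k-1}-1)) ((q^{ℓ-1}-1)/(q^{n-ℓ-1}-1)) ((q^{n-ℓ}-1)/(q^{n-k}-1))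
   [n-1 choose k-1][n-1 choose ℓ-1]`,
and `(θ_i^{k,ℓ} b(0))² < (1/4q) [n-1 choose k-1][n-1 choose ℓ-1]`. -/
theorem theta_mul_b_zero_sq
    (q n k l : ℕ) (hq : IsPrimePow q)
    (hl1 : 1 ≤ l) (hlk : l < k) (hkn : 2 * k ≤ n)
    (i : ℕ) (hi2 : 2 ≤ i) (hil : i ≤ l) :
    (theta (q : ℝ) n i k l * bF (q : ℝ) n k l 0) ^ 2 ≤
        (theta (q : ℝ) n 2 k l * bF (q : ℝ) n k l 0) ^ 2 ∧
    (theta (q : ℝ) n 2 k l * bF (q : ℝ) n k l 0) ^ 2 =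
      (1 / 4) * (q : ℝ) ^ ((2 : ℤ) - 2 * k) *
        (((q : ℝ) ^ ((k : ℤ) - 1) - 1) / ((q : ℝ) ^ ((n : ℤ) - k - 1) - 1)) *
        (((q : ℝ) ^ ((l : ℤ) - 1) - 1) / ((q : ℝ) ^ ((n : ℤ) - l - 1) - 1)) *
        (((q : ℝ) ^ ((n : ℤ) - l) - 1) / ((q : ℝ) ^ ((n : ℤ) - k) - 1)) *
        gbinom (q : ℝ) ((n : ℤ) - 1) ((k : ℤ) - 1) *
        gbinom (q : ℝ) ((n : ℤ) - 1) ((l : ℤ) - 1) ∧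
    (theta (q : ℝ) n i k l * bF (q : ℝ) n k l 0) ^ 2 <
      (1 / (4 * q)) * gbinom (q : ℝ) ((n : ℤ) - 1) ((k : ℤ) - 1) *
        gbinom (q : ℝ) ((n : ℤ) - 1) ((l : ℤ) - 1) := by
  have h2q : 2 ≤ q := hq.two_le
  have hq2 : (2 : ℝ) ≤ (q : ℝ) := by exact_mod_cast h2q
  have hq1 : (1 : ℝ) < (q : ℝ) := by linarith
  have hl2 : 2 ≤ l := le_trans hi2 hil
  refine ⟨ThetaAux.T_le hq2 hlk hkn i hi2 hil, ThetaAux.T2_eq hq1 hl2 hlk hkn, ?_⟩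
  exact lt_of_le_of_lt (ThetaAux.T_le hq2 hlk hkn i hi2 hil)
    (by rw [ThetaAux.T2_eq hq1 hl2 hlk hkn]; exact ThetaAux.T2_lt hq2 hl2 hlk hkn)
end
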